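/- (Dilute regime.) Let c > 0 and β > 2 be reals, and let m : ℕ → ℕ be a sequence with m(n)/n^β → c. Then P₂(m(n), n)/n → 1 as n → ∞. -/

import Mathlib

open Filter Real
open intervalIntegral

/-- The normalized average outcome-collision probability of an `n`-photon, `m`-mode Fock
boson sampler averaged over Haar-random interferometers (integral representation). -/
noncomputable def P2 (m n : ℕ) : ℝ :=
  ((n : ℝ) + m - 1) *
    ∫ θ in (0:ℝ)..(Real.pi / 2), Real.cos θ ^ (n + m - 2) * Real.sin ((n + 1) * θ)

noncomputable def II (K q : ℕ) : ℝ :=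
  ∫ θ in (0:ℝ)..(Real.pi/2), Real.cos θ ^ K * Real.sin (q * θ)

lemma II_zero (K : ℕ) : II K 0 = 0 := by simp [II]

lemma II_one (K : ℕ) : II K 1 = 1 / (K + 1) := by
  have h : ∀ θ ∈ Set.uIcc (0:ℝ) (Real.pi/2),
      HasDerivAt (fun θ : ℝ => -(Real.cos θ ^ (K+1)) / (K+1))
        (Real.cos θ ^ K * Real.sin θ) θ := by
    intro θ _
    have h1 : HasDerivAt (fun θ : ℝ => Real.cos θ ^ (K+1))
        (((K:ℝ)+1) * Real.cos θ ^ K * (-Real.sin θ)) θ := by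
      simpa using (Real.hasDerivAt_cos θ).fun_pow (K+1)
    have := (h1.neg).div_const ((K:ℝ)+1)
    refine this.congr_deriv ?_
    have hK : ((K:ℝ)+1) ≠ 0 := by positivity
    field_simp
  have hint : IntervalIntegrable (fun θ : ℝ => Real.cos θ ^ K * Real.sin θ)
      MeasureTheory.volume 0 (Real.pi/2) := by
    apply Continuous.intervalIntegrable; continuity
  have := intervalIntegral.integral_eq_sub_of_hasDerivAt h hint
  simp [Real.cos_pi_div_two, II] at this ⊢
  rw [this]
  ring

lemma II_rec (K q : ℕ) :
    ((K:ℝ) + q + 2) * II K (q+2) = 2 + ((K:ℝ) - q) * II K q := by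
  set a : ℝ := ((K:ℝ) - q)/2
  set b : ℝ := ((K:ℝ) + q + 2)/2
  have key : ∀ θ ∈ Set.uIcc (0:ℝ) (Real.pi/2),
      HasDerivAt (fun θ : ℝ => Real.cos θ ^ (K+1) * Real.cos (((q:ℝ)+1) * θ))
        (a * (Real.cos θ ^ K * Real.sin ((q:ℝ) * θ))
          - b * (Real.cos θ ^ K * Real.sin (((q:ℝ)+2) * θ))) θ := by
    intro θ _
    have h1 : HasDerivAt (fun θ : ℝ => Real.cos θ ^ (K+1))
        (((K:ℝ)+1) * Real.cos θ ^ K * (-Real.sin θ)) θ := by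
      simpa using (Real.hasDerivAt_cos θ).fun_pow (K+1)
    have h2 : HasDerivAt (fun θ : ℝ => Real.cos (((q:ℝ)+1) * θ))
        (-Real.sin (((q:ℝ)+1) * θ) * ((q:ℝ)+1)) θ := by
      simpa using ((hasDerivAt_id θ).const_mul ((q:ℝ)+1)).cos
    have h := h1.fun_mul h2
    refine h.congr_deriv ?_
    have e1 : ((q:ℝ)+2) * θ = ((q:ℝ)+1)*θ + θ := by ring
    have e2 : (q:ℝ) * θ = ((q:ℝ)+1)*θ - θ := by ring
    rw [e1, e2, Real.sin_add, Real.sin_sub]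
    simp only [a, b]
    ring
  have hint : IntervalIntegrable
      (fun θ : ℝ => a * (Real.cos θ ^ K * Real.sin ((q:ℝ) * θ))
          - b * (Real.cos θ ^ K * Real.sin (((q:ℝ)+2) * θ)))
      MeasureTheory.volume 0 (Real.pi/2) := by
    apply Continuous.intervalIntegrable
    fun_prop
  have hF := intervalIntegral.integral_eq_sub_of_hasDerivAt key hint
  have hRHS : ((fun θ : ℝ => Real.cos θ ^ (K+1) * Real.cos (((q:ℝ)+1) * θ)) (Real.pi/2)
      - (fun θ : ℝ => Real.cos θ ^ (K+1) * Real.cos (((q:ℝ)+1) * θ)) 0) = -1 := by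
    simp [Real.cos_pi_div_two]
  rw [hRHS] at hF
  have hi1 : IntervalIntegrable (fun θ : ℝ => Real.cos θ ^ K * Real.sin ((q:ℝ) * θ))
      MeasureTheory.volume 0 (Real.pi/2) := by
    apply Continuous.intervalIntegrable; fun_prop
  have hi2 : IntervalIntegrable (fun θ : ℝ => Real.cos θ ^ K * Real.sin (((q:ℝ)+2) * θ))
      MeasureTheory.volume 0 (Real.pi/2) := by
    apply Continuous.intervalIntegrable; fun_prop
  rw [intervalIntegral.integral_sub ((hi1.const_mul a)) ((hi2.const_mul b)),
    intervalIntegral.integral_const_mul, intervalIntegral.integral_const_mul] at hF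
  have eq1 : II K q = ∫ θ in (0:ℝ)..(Real.pi/2), Real.cos θ ^ K * Real.sin ((q:ℝ) * θ) := rfl
  have eq2 : II K (q+2) = ∫ θ in (0:ℝ)..(Real.pi/2), Real.cos θ ^ K * Real.sin (((q:ℝ)+2) * θ) := by
    simp only [II]
    norm_num
  rw [eq2]
  rw [eq1] at *
  simp only [a, b] at hF
  linarith

lemma II_bounds (K : ℕ) : ∀ q : ℕ, q ≤ K + 1 →
    (q:ℝ)/((K:ℝ)+1) - (q:ℝ)^3/((K:ℝ)+1)^2 ≤ II K q ∧ II K q ≤ (q:ℝ)/((K:ℝ)+1) := by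
  have hD : (0:ℝ) < (K:ℝ) + 1 := by positivity
  intro q
  induction q using Nat.strong_induction_on with
  | _ q ih =>
    match q with
    | 0 => intro _; simp [II_zero]
    | 1 => intro _
           constructor
           · rw [II_one]; push_cast
             have : (0:ℝ) ≤ 1/((K:ℝ)+1)^2 := by positivity
             nlinarith [sq_nonneg ((K:ℝ)+1)]
           · rw [II_one]
             push_cast
             exact le_rfl
    | (q+2) =>
      intro hq
      have hqK : (q:ℝ) ≤ (K:ℝ) - 1 := by
        have h1 : q + 1 ≤ K := by omega
        have h2 : ((q:ℝ) + 1) ≤ (K:ℝ) := by exact_mod_cast h1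
        linarith
      have hq0 : (0:ℝ) ≤ (q:ℝ) := Nat.cast_nonneg q
      obtain ⟨hl, hu⟩ := ih q (by omega) (by omega)
      have hrec := II_rec K q
      have hKq2 : (0:ℝ) < (K:ℝ) + q + 2 := by positivity
      have hI : II K (q+2) = (2 + ((K:ℝ) - q) * II K q) / ((K:ℝ) + q + 2) := by
        field_simp; linarith
      have hKq : (0:ℝ) ≤ (K:ℝ) - q := by linarith
      have hl' : (q:ℝ)*((K:ℝ)+1) - (q:ℝ)^3 ≤ II K q * ((K:ℝ)+1)^2 := by
        have h := mul_le_mul_of_nonneg_right hl (le_of_lt (by positivity : (0:ℝ) < ((K:ℝ)+1)^2))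
        calc (q:ℝ)*((K:ℝ)+1) - (q:ℝ)^3
            = ((q:ℝ)/((K:ℝ)+1) - (q:ℝ)^3/((K:ℝ)+1)^2) * ((K:ℝ)+1)^2 := by field_simp
          _ ≤ _ := h
      have hu' : II K q * ((K:ℝ)+1) ≤ (q:ℝ) := by
        have h := mul_le_mul_of_nonneg_right hu hD.le
        calc II K q * ((K:ℝ)+1) ≤ (q:ℝ)/((K:ℝ)+1) * ((K:ℝ)+1) := h
          _ = (q:ℝ) := by field_simp
      push_cast
      constructor
      · have eL : ((q:ℝ)+2)/((K:ℝ)+1) - ((q:ℝ)+2)^3/((K:ℝ)+1)^2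
            = (((q:ℝ)+2)*((K:ℝ)+1) - ((q:ℝ)+2)^3)/((K:ℝ)+1)^2 := by
          field_simp
        rw [hI, eL, div_le_div_iff₀ (by positivity) hKq2]
        have h2 : ((K:ℝ)-q) * ((q:ℝ)*((K:ℝ)+1) - (q:ℝ)^3) ≤ ((K:ℝ)-q) * (II K q * ((K:ℝ)+1)^2) :=
          mul_le_mul_of_nonneg_left hl' hKq
        nlinarith [h2, mul_pos hD hD, mul_nonneg hq0 hq0, mul_nonneg (mul_nonneg hq0 hq0) hq0,
          mul_nonneg hD.le hq0, mul_nonneg (mul_nonneg hD.le hq0) hq0,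
          mul_nonneg (mul_nonneg (mul_nonneg hq0 hq0) hq0) hq0]
      · rw [hI, div_le_div_iff₀ hKq2 hD]
        have h3 : ((K:ℝ)-q) * (II K q * ((K:ℝ)+1)) ≤ ((K:ℝ)-q) * (q:ℝ) :=
          mul_le_mul_of_nonneg_left hu' hKq
        nlinarith [h3, sq_nonneg ((q:ℝ))]

lemma P2_eq (mm n : ℕ) (h : 2 ≤ mm) :
    P2 mm n = ((↑(n + mm - 2):ℝ) + 1) * II (n + mm - 2) (n+1) := by
  have h2 : 2 ≤ n + mm := by omega
  simp only [P2, II, Nat.cast_add, Nat.cast_one]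
  congr 1
  rw [Nat.cast_sub h2]
  push_cast
  ring

/-- Dilute regime. If `m n / n^β → c` with `β > 2`, then
`P₂(m n, n)/n → 1`. -/
theorem stmt7 (c β : ℝ) (hc : 0 < c) (hβ : 2 < β) (m : ℕ → ℕ)
    (hm : Tendsto (fun n : ℕ => (m n : ℝ) / (n : ℝ) ^ β) atTop (nhds c)) :
    Tendsto (fun n : ℕ => P2 (m n) n / n) atTop (nhds 1) := by
  have hβ0 : (0:ℝ) < β := by linarith
  have hnb : Tendsto (fun n : ℕ => (n:ℝ)^β) atTop atTop :=
    (tendsto_rpow_atTop hβ0).comp tendsto_natCast_atTop_atTop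
  -- m n → ∞
  have hmm' : Tendsto (fun n : ℕ => (m n : ℝ)) atTop atTop := by
    have h := Filter.Tendsto.pos_mul_atTop hc hm hnb
    refine h.congr' ?_
    filter_upwards [eventually_ge_atTop 1] with n hn
    have hn0 : ((n:ℝ))^β ≠ 0 := by
      have : (0:ℝ) < (n:ℝ) := by exact_mod_cast hn
      positivity
    field_simp
  have hev2 : ∀ᶠ n in atTop, 2 ≤ m n := by
    have := hmm'.eventually_ge_atTop (2:ℝ)
    filter_upwards [this] with n h
    exact_mod_cast h
  set K : ℕ → ℕ := fun n => n + m n - 2 with hK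
  -- (K n + 1)/n^β → c
  have hKc : Tendsto (fun n : ℕ => ((K n : ℝ) + 1) / (n:ℝ)^β) atTop (nhds c) := by
    have h1 : Tendsto (fun n : ℕ => (n:ℝ) / (n:ℝ)^β) atTop (nhds 0) := by
      have h := (tendsto_rpow_neg_atTop (by linarith : (0:ℝ) < β - 1)).comp
        tendsto_natCast_atTop_atTop
      refine h.congr' ?_
      filter_upwards [eventually_ge_atTop 1] with n hn
      have hn0 : (0:ℝ) < (n:ℝ) := by exact_mod_cast hn
      simp only [Function.comp]
      rw [show -(β - 1) = 1 - β by ring, Real.rpow_sub hn0, Real.rpow_one]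
    have h2 : Tendsto (fun n : ℕ => (1:ℝ) / (n:ℝ)^β) atTop (nhds 0) := by
      have h := (tendsto_rpow_neg_atTop hβ0).comp tendsto_natCast_atTop_atTop
      refine h.congr' ?_
      filter_upwards [eventually_ge_atTop 1] with n hn
      have hn0 : (0:ℝ) < (n:ℝ) := by exact_mod_cast hn
      simp only [Function.comp]
      rw [Real.rpow_neg hn0.le, one_div]
    have h3 := (h1.add hm).sub h2
    rw [show (0:ℝ) + c - 0 = c by ring] at h3
    refine h3.congr' ?_
    filter_upwards [hev2] with n h2n
    have : ((K n : ℝ)) = (n:ℝ) + (m n : ℝ) - 2 := by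
      simp only [hK]
      rw [Nat.cast_sub (by omega)]
      push_cast; ring
    rw [this]
    ring
  have hup1 : Tendsto (fun n : ℕ => ((n:ℝ)+1)/n) atTop (nhds 1) := by
    have h := tendsto_one_div_atTop_nhds_zero_nat.const_add (1:ℝ)
    rw [add_zero] at h
    refine h.congr' ?_
    filter_upwards [eventually_ge_atTop 1] with n hn
    have hn0 : ((n:ℝ)) ≠ 0 := by
      have : (0:ℝ) < (n:ℝ) := by exact_mod_cast hn
      positivity
    field_simp
  -- T n → 0
  have hT : Tendsto (fun n : ℕ => ((n:ℝ)+1)^3 / (((K n : ℝ)+1) * n)) atTop (nhds 0) := by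
    have hA : Tendsto (fun n : ℕ => ((n:ℝ)+1)^3 / ((n:ℝ)^β * n)) atTop (nhds 0) := by
      have hcube : Tendsto (fun n : ℕ => (((n:ℝ)+1)/n)^3) atTop (nhds 1) := by
        simpa using hup1.pow 3
      have hr : Tendsto (fun n : ℕ => (n:ℝ)^(2-β)) atTop (nhds 0) :=
        (tendsto_rpow_neg_atTop (by linarith : (0:ℝ) < β - 2)).comp
          tendsto_natCast_atTop_atTop |>.congr (by
            intro n
            simp only [Function.comp]
            rw [show -(β-2) = 2-β by ring])
      have h := hcube.mul hr
      rw [one_mul] at h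
      refine h.congr' ?_
      filter_upwards [eventually_ge_atTop 1] with n hn
      have hn0 : (0:ℝ) < (n:ℝ) := by exact_mod_cast hn
      have hb0 : (0:ℝ) < ((n:ℝ))^β := Real.rpow_pos_of_pos hn0 β
      rw [Real.rpow_sub hn0]
      rw [show ((2:ℝ)) = ((2:ℕ):ℝ) by norm_num, Real.rpow_natCast]
      field_simp
    have hB : Tendsto (fun n : ℕ => (n:ℝ)^β / ((K n : ℝ)+1)) atTop (nhds c⁻¹) := by
      have := hKc.inv₀ hc.ne'
      refine this.congr ?_
      intro n
      rw [inv_div]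
    have h := hA.mul hB
    rw [zero_mul] at h
    refine h.congr' ?_
    filter_upwards [eventually_ge_atTop 1, hev2] with n hn h2n
    have hn0 : (0:ℝ) < (n:ℝ) := by exact_mod_cast hn
    have hb0 : (0:ℝ) < ((n:ℝ))^β := Real.rpow_pos_of_pos hn0 β
    have hd0 : (0:ℝ) < (K n : ℝ) + 1 := by positivity
    field_simp
  -- squeeze
  have hlow : Tendsto (fun n : ℕ => ((n:ℝ)+1)/n - ((n:ℝ)+1)^3 / (((K n : ℝ)+1) * n))
      atTop (nhds 1) := by
    have := hup1.sub hT
    simpa using this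
  refine tendsto_of_tendsto_of_tendsto_of_le_of_le' hlow hup1 ?_ ?_
  · filter_upwards [eventually_ge_atTop 1, hev2] with n hn h2n
    have hb := II_bounds (K n) (n+1) (by simp only [hK]; omega)
    have hn0 : (0:ℝ) < (n:ℝ) := by exact_mod_cast hn
    have hd0 : (0:ℝ) < (K n : ℝ) + 1 := by positivity
    rw [P2_eq (m n) n h2n]
    obtain ⟨hl, hu⟩ := hb
    push_cast at hl hu
    set d := (K n : ℝ) + 1
    set In := II (K n) (n+1)
    have key : ((n:ℝ)+1)*d - ((n:ℝ)+1)^3 ≤ In * d^2 := by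
      calc ((n:ℝ)+1)*d - ((n:ℝ)+1)^3
          = (((n:ℝ)+1)/d - ((n:ℝ)+1)^3/d^2) * d^2 := by field_simp
        _ ≤ In * d^2 := mul_le_mul_of_nonneg_right hl (by positivity)
    rw [div_sub_div _ _ hn0.ne' (by positivity), div_le_div_iff₀ (by positivity) hn0]
    nlinarith [mul_le_mul_of_nonneg_left key (le_of_lt (mul_pos hn0 hn0)),
      mul_pos hn0 hn0, mul_pos hd0 hn0]
  · filter_upwards [eventually_ge_atTop 1, hev2] with n hn h2n
    have hb := II_bounds (K n) (n+1) (by simp only [hK]; omega)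
    have hn0 : (0:ℝ) < (n:ℝ) := by exact_mod_cast hn
    have hd0 : (0:ℝ) < (K n : ℝ) + 1 := by positivity
    rw [P2_eq (m n) n h2n]
    obtain ⟨hl, hu⟩ := hb
    push_cast at hl hu
    have key : ((K n : ℝ) + 1) * II (K n) (n+1) ≤ (n:ℝ)+1 := by
      have := mul_le_mul_of_nonneg_left hu hd0.le
      calc ((K n : ℝ) + 1) * II (K n) (n+1) ≤ ((K n : ℝ) + 1) * (((n:ℝ)+1)/((K n : ℝ)+1)) := this
        _ = (n:ℝ)+1 := by field_simp
    exact div_le_div_of_nonneg_right key hn0.le
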